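/- A non-discrete T1 topological space in which every compact subset is finite is not weakly open-compact attainable. -/

import Mathlib

open Filter Topology Set

def KappaFU (X : Type*) [TopologicalSpace X] : Prop :=
  ∀ U : Set X, IsOpen U → ∀ x ∈ closure U,
    ∃ u : ℕ → X, (∀ n, u n ∈ U) ∧ Filter.Tendsto u Filter.atTop (nhds x)

def OCA (X : Type*) [TopologicalSpace X] : Prop :=
  ∀ W : Set X, IsOpen W → ∀ z ∈ closure W,
    ∃ K : Set X, IsCompact K ∧ z ∈ K ∧ z ∈ closure (K ∩ W)

def WOCA (X : Type*) [TopologicalSpace X] : Prop :=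
  ∀ W : Set X, IsOpen W → ¬ IsClosed W →
    ∃ z ∈ closure W \ W, ∃ K : Set X, IsCompact K ∧ z ∈ K ∧ z ∈ closure (K ∩ W)

def KappaSeq (X : Type*) [TopologicalSpace X] : Prop :=
  ∀ W : Set X, IsOpen W → ¬ IsClosed W →
    ∃ z ∈ closure W \ W, ∃ u : ℕ → X, (∀ n, u n ∈ W) ∧ Filter.Tendsto u Filter.atTop (nhds z)

def KappaPseudoOpen {X Y : Type*} [TopologicalSpace X] [TopologicalSpace Y] (f : X → Y) : Prop :=
  ∀ (y : Y) (U : Set X), IsOpen U → f ⁻¹' {y} ⊆ U → y ∈ interior (closure (f '' U))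

def WeaklyKappaPseudoOpen {X Y : Type*} [TopologicalSpace X] [TopologicalSpace Y] (f : X → Y) : Prop :=
  ∀ U : Set Y, IsOpen U → (IsClosed U ↔ IsClosed (f ⁻¹' U))

theorem not_WOCA_of_nondiscrete_finite_compacts (X : Type*) [TopologicalSpace X] [T1Space X]
    (hnd : ¬ DiscreteTopology X) (h : ∀ K : Set X, IsCompact K → K.Finite) :
    ¬ WOCA X := by
  intro hw
  obtain ⟨x, hx⟩ : ∃ x : X, ¬ IsOpen ({x} : Set X) := by
    by_contra hc
    push_neg at hc
    exact hnd (discreteTopology_iff_isOpen_singleton.mpr hc)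
  have hWopen : IsOpen ({x}ᶜ : Set X) := isOpen_compl_singleton
  have hWnc : ¬ IsClosed ({x}ᶜ : Set X) := fun hcl => hx (by simpa using hcl.isOpen_compl)
  obtain ⟨z, hz, K, hK, hzK, hzc⟩ := hw _ hWopen hWnc
  have hzx : z = x := by
    have := hz.2
    simpa using this
  have hfin : (K ∩ {x}ᶜ).Finite := ((h K hK).inter_of_left _)
  have hcl : IsClosed (K ∩ {x}ᶜ) := hfin.isClosed
  rw [hcl.closure_eq] at hzc
  exact hzc.2 (by simp [hzx])
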